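/- arXiv:2509.20924 — 4 statements merged into one kernel-verified Lean document; each statement's English description precedes it below -/
import Mathlib

section
/- Let P and Q be probability measures on a measurable space Ω with Q absolutely continuous with respect to P and KL(Q‖P) < ∞. Let f : Ω → ℝ be measurable and Q-integrable with E_P[f] = μ, and suppose f − μ is sub-Gaussian with variance proxy σ² > 0 under P, i.e. E_P[exp(t(f − μ))] ≤ exp(σ²t²/2) for every real t. Then for every real λ > 0, E_Q[f] ≥ μ − KL(Q‖P)/λ − σ²λ/2. -/
open MeasureTheory Real

open Classical in
/-- The Kullback–Leibler divergence of `Q` from `P`, as an extended real number: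
it is the `Q`-integral of the log-likelihood ratio `llr Q P` when `Q ≪ P` and this
log-likelihood ratio is `Q`-integrable, and `⊤` otherwise. -/
noncomputable def klDiv {Ω : Type*} [MeasurableSpace Ω] (Q P : Measure Ω) : EReal :=
  if Q ≪ P ∧ Integrable (llr Q P) Q
  then ((∫ ω, llr Q P ω ∂Q : ℝ) : EReal)
  else ⊤

/-- Nonnegativity of the KL divergence integral. -/
lemma aux_integral_llr_nonneg {α : Type*} [MeasurableSpace α] {μ ν : Measure α}
    [IsProbabilityMeasure μ] [IsProbabilityMeasure ν] (hμν : μ ≪ ν)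
    (h_int : Integrable (llr μ ν) μ) : 0 ≤ ∫ x, llr μ ν x ∂μ := by
  have h1 : ∀ᵐ x ∂μ, -llr μ ν x ≤ (ν.rnDeriv μ x).toReal - 1 := by
    filter_upwards [exp_neg_llr hμν] with x hx
    have h2 := Real.add_one_le_exp (-llr μ ν x)
    rw [hx] at h2
    linarith
  have hint2 : Integrable (fun x => (ν.rnDeriv μ x).toReal - 1) μ :=
    Measure.integrable_toReal_rnDeriv.sub (integrable_const 1)
  have h3 := integral_mono_ae h_int.neg hint2 h1
  simp only [Pi.neg_apply] at h3
  rw [integral_neg] at h3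
  rw [integral_sub Measure.integrable_toReal_rnDeriv (integrable_const 1)] at h3
  simp only [integral_const, measure_univ, probReal_univ, ENNReal.toReal_one, smul_eq_mul, one_mul] at h3
  have h4 : ∫ x, (ν.rnDeriv μ x).toReal ∂μ ≤ 1 := by
    rw [Measure.integral_toReal_rnDeriv']
    have := ENNReal.toReal_nonneg (a := ν.singularPart μ Set.univ)
    simp only [measureReal_def, measure_univ, ENNReal.toReal_one]
    linarith
  linarith

/-- If `f - μ` is sub-Gaussian with variance proxy `v` under `P`, `Q ≪ P` with finite
KL divergence and `f` is `Q`-integrable, then for every `λ > 0`,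
`E_Q[f] ≥ μ - KL(Q‖P)/λ - v λ / 2`. -/
theorem subgaussian_change_of_measure_lower_bound {Ω : Type*} [MeasurableSpace Ω]
    (P Q : Measure Ω) [IsProbabilityMeasure P] [IsProbabilityMeasure Q]
    (hQP : Q ≪ P) (hKL : klDiv Q P < ⊤)
    (f : Ω → ℝ) (hf : Measurable f) (hfQ : Integrable f Q)
    (μ : ℝ) (hμ : ∫ ω, f ω ∂P = μ)
    (v : ℝ) (hv : 0 < v)
    (hSG : ∀ t : ℝ, Integrable (fun ω => Real.exp (t * (f ω - μ))) P ∧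
      ∫ ω, Real.exp (t * (f ω - μ)) ∂P ≤ Real.exp (v * t ^ 2 / 2)) :
    ∀ l : ℝ, 0 < l →
      ∫ ω, f ω ∂Q ≥ μ - (klDiv Q P).toReal / l - v * l / 2 := by
  intro l hl
  -- KL divergence is finite, extract integrability of llr
  have hllr : Integrable (llr Q P) Q := by
    by_contra h
    rw [klDiv, if_neg (fun hc => h hc.2)] at hKL
    exact absurd hKL (lt_irrefl _)
  have hKLeq : (klDiv Q P).toReal = ∫ ω, llr Q P ω ∂Q := by
    rw [klDiv, if_pos ⟨hQP, hllr⟩]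
    simp
  -- the tilting function
  set g : Ω → ℝ := fun ω => (-l) * (f ω - μ) with hg
  obtain ⟨hgi, hgb⟩ := hSG (-l)
  have hgQ : Integrable g Q := (hfQ.sub (integrable_const μ)).const_mul (-l)
  -- tilted measure
  have hP : IsProbabilityMeasure (P.tilted g) := isProbabilityMeasure_tilted hgi
  have hQT : Q ≪ P.tilted g := hQP.trans (absolutelyContinuous_tilted hgi)
  have hllrT : Integrable (llr Q (P.tilted g)) Q :=
    integrable_llr_tilted_right hQP hgQ hllr hgi
  have h0 : 0 ≤ ∫ ω, llr Q (P.tilted g) ω ∂Q := aux_integral_llr_nonneg hQT hllrT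
  rw [integral_llr_tilted_right hQP hgQ hgi hllr] at h0
  -- bound log ∫ exp g dP
  have hlog : Real.log (∫ ω, Real.exp (g ω) ∂P) ≤ v * l ^ 2 / 2 := by
    have hpos : 0 < ∫ ω, Real.exp (g ω) ∂P := integral_exp_pos hgi
    have : Real.log (∫ ω, Real.exp (g ω) ∂P) ≤ Real.log (Real.exp (v * (-l) ^ 2 / 2)) :=
      Real.log_le_log hpos hgb
    rw [Real.log_exp, neg_sq] at this
    exact this
  have hgint : ∫ ω, g ω ∂Q = (-l) * (∫ ω, f ω ∂Q - μ) := by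
    rw [hg]
    rw [integral_const_mul]
    rw [integral_sub hfQ (integrable_const μ)]
    simp
  rw [hgint] at h0
  rw [hKLeq]
  have hKLnn : 0 ≤ ∫ ω, llr Q P ω ∂Q := aux_integral_llr_nonneg hQP hllr
  -- combine
  have key : (-l) * (∫ ω, f ω ∂Q - μ) ≤ ∫ ω, llr Q P ω ∂Q + v * l ^ 2 / 2 := by linarith
  have hK : (∫ ω, llr Q P ω ∂Q) / l * l = ∫ ω, llr Q P ω ∂Q := div_mul_cancel₀ _ hl.ne'
  rw [ge_iff_le, ← sub_nonneg]
  rw [← mul_nonneg_iff_of_pos_right hl]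
  nlinarith [key, hK]
end

section
/- Let P and Q be probability measures on a measurable space Ω with Q absolutely continuous with respect to P and KL(Q‖P) < ∞. Let f : Ω → ℝ be measurable and Q-integrable with E_P[f] = μ, and suppose f − μ is sub-Gaussian with variance proxy σ² > 0 under P, i.e. E_P[exp(t(f − μ))] ≤ exp(σ²t²/2) for every real t. Then E_Q[f] ≥ μ − √(2·σ²·KL(Q‖P)). -/
open MeasureTheory Real

open scoped ENNReal NNReal in
/-- Non-negativity of the relative entropy (Gibbs' inequality). -/
lemma gibbs_nonneg {Ω : Type*} [MeasurableSpace Ω] (ρ ν : Measure Ω)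
    [IsProbabilityMeasure ρ] [IsProbabilityMeasure ν] (h : ρ ≪ ν)
    (hint : Integrable (llr ρ ν) ρ) : 0 ≤ ∫ ω, llr ρ ν ω ∂ρ := by
  set rn := ρ.rnDeriv ν with hrn
  -- lintegral of inverse ≤ 1
  have hwd : ν.withDensity rn = ρ := Measure.withDensity_rnDeriv_eq ρ ν h
  have hmeas : Measurable rn := Measure.measurable_rnDeriv ρ ν
  have hlint : ∫⁻ ω, (rn ω)⁻¹ ∂ρ ≤ 1 := by
    rw [← hwd, lintegral_withDensity_eq_lintegral_mul ν hmeas (g := fun ω => (rn ω)⁻¹) hmeas.inv]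
    calc ∫⁻ ω, (rn * fun ω => (rn ω)⁻¹) ω ∂ν ≤ ∫⁻ _, 1 ∂ν := by
          refine lintegral_mono fun ω => ?_
          simp only [Pi.mul_apply]
          rcases eq_or_ne (rn ω) 0 with h0 | h0
          · simp [h0]
          rcases eq_or_ne (rn ω) ⊤ with ht | ht
          · simp [ht]
          · rw [ENNReal.mul_inv_cancel h0 ht]
      _ = 1 := by simp
  have hinv_int : Integrable (fun ω => ((rn ω).toReal)⁻¹) ρ := by
    refine ⟨(hmeas.ennreal_toReal.inv).aestronglyMeasurable, ?_⟩
    rw [hasFiniteIntegral_iff_ofReal (Filter.Eventually.of_forall fun ω => by positivity)]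
    refine lt_of_le_of_lt (lintegral_mono fun ω => ?_) (lt_of_le_of_lt hlint ?_)
    · rcases eq_or_ne (rn ω) 0 with h0 | h0
      · simp [h0]
      rcases eq_or_ne (rn ω) ⊤ with ht | ht
      · simp [ht]
      · rw [← ENNReal.toReal_inv, ENNReal.ofReal_toReal (by simp [h0])]
    · exact ENNReal.one_lt_top
  have hinv_le : ∫ ω, ((rn ω).toReal)⁻¹ ∂ρ ≤ 1 := by
    rw [integral_eq_lintegral_of_nonneg_ae (Filter.Eventually.of_forall fun ω => by positivity)
      hinv_int.aestronglyMeasurable]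
    have : ∫⁻ ω, ENNReal.ofReal ((rn ω).toReal)⁻¹ ∂ρ ≤ 1 := by
      refine le_trans (lintegral_mono fun ω => ?_) hlint
      rcases eq_or_ne (rn ω) 0 with h0 | h0
      · simp [h0]
      rcases eq_or_ne (rn ω) ⊤ with ht | ht
      · simp [ht]
      · rw [← ENNReal.toReal_inv, ENNReal.ofReal_toReal (by simp [h0])]
    calc (∫⁻ ω, ENNReal.ofReal ((rn ω).toReal)⁻¹ ∂ρ).toReal ≤ (1 : ℝ≥0∞).toReal :=
          ENNReal.toReal_mono (by simp) this
      _ = 1 := by simp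
  have hae : ∀ᵐ ω ∂ρ, 1 - ((rn ω).toReal)⁻¹ ≤ llr ρ ν ω := by
    filter_upwards [Measure.rnDeriv_pos h, h.ae_le (Measure.rnDeriv_lt_top ρ ν)]
      with ω hpos hlt
    have h0 : 0 < (rn ω).toReal := ENNReal.toReal_pos hpos.ne' hlt.ne
    have := Real.log_le_sub_one_of_pos (inv_pos.mpr h0)
    rw [Real.log_inv] at this
    rw [llr_def]
    linarith
  have h1 : ∫ ω, (1 - ((rn ω).toReal)⁻¹) ∂ρ ≤ ∫ ω, llr ρ ν ω ∂ρ :=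
    integral_mono_ae ((integrable_const 1).sub hinv_int) hint hae
  rw [integral_sub (integrable_const 1) hinv_int] at h1
  simp only [integral_const, measure_univ, probReal_univ, ENNReal.toReal_one, smul_eq_mul, one_mul] at h1
  linarith

/-- **Certified robustness via KL divergence.** If `f - μ` is sub-Gaussian with variance
proxy `v` under `P`, `Q ≪ P` with finite KL divergence and `f` is `Q`-integrable, then
`E_Q[f] ≥ μ - √(2 v KL(Q‖P))`. -/
theorem subgaussian_kl_lower_bound {Ω : Type*} [MeasurableSpace Ω]
    (P Q : Measure Ω) [IsProbabilityMeasure P] [IsProbabilityMeasure Q]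
    (hQP : Q ≪ P) (hKL : klDiv Q P < ⊤)
    (f : Ω → ℝ) (hf : Measurable f) (hfQ : Integrable f Q)
    (μ : ℝ) (hμ : ∫ ω, f ω ∂P = μ)
    (v : ℝ) (hv : 0 < v)
    (hSG : ∀ t : ℝ, Integrable (fun ω => Real.exp (t * (f ω - μ))) P ∧
      ∫ ω, Real.exp (t * (f ω - μ)) ∂P ≤ Real.exp (v * t ^ 2 / 2)) :
    ∫ ω, f ω ∂Q ≥ μ - Real.sqrt (2 * v * (klDiv Q P).toReal) := by
  -- unpack KL
  have hcond : Q ≪ P ∧ Integrable (llr Q P) Q := by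
    by_contra hc
    rw [klDiv, if_neg hc] at hKL
    exact lt_irrefl _ hKL
  have hllr : Integrable (llr Q P) Q := hcond.2
  set K : ℝ := ∫ ω, llr Q P ω ∂Q with hK
  have hKtoReal : (klDiv Q P).toReal = K := by
    rw [klDiv, if_pos hcond]; simp [hK]
  rw [hKtoReal]
  -- key inequality for every t
  have key : ∀ t : ℝ, t * (μ - ∫ ω, f ω ∂Q) ≤ K + v * t ^ 2 / 2 := by
    intro t
    set g : Ω → ℝ := fun ω => t * (μ - f ω) with hg
    have hgeq : ∀ ω, g ω = (-t) * (f ω - μ) := fun ω => by ring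
    have hexpP : Integrable (fun ω => Real.exp (g ω)) P := by
      simpa only [hgeq] using (hSG (-t)).1
    have hexp_le : ∫ ω, Real.exp (g ω) ∂P ≤ Real.exp (v * t ^ 2 / 2) := by
      have := (hSG (-t)).2
      simpa only [hgeq, neg_pow, neg_neg, even_two.neg_pow] using this
    have hgQ : Integrable g Q := ((integrable_const μ).sub hfQ).const_mul t
    set ν : Measure Ω := P.tilted g with hν
    have : IsProbabilityMeasure ν := isProbabilityMeasure_tilted hexpP
    have hQν : Q ≪ ν := hQP.trans (absolutelyContinuous_tilted hexpP)
    have hint : Integrable (llr Q ν) Q :=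
      integrable_llr_tilted_right hQP hgQ hllr hexpP
    have h0 : 0 ≤ ∫ ω, llr Q ν ω ∂Q := gibbs_nonneg Q ν hQν hint
    rw [integral_llr_tilted_right hQP hgQ hexpP hllr] at h0
    have hgint : ∫ ω, g ω ∂Q = t * (μ - ∫ ω, f ω ∂Q) := by
      simp only [hg]
      rw [integral_const_mul, integral_sub (integrable_const μ) hfQ]
      simp
    have hlog : Real.log (∫ ω, Real.exp (g ω) ∂P) ≤ v * t ^ 2 / 2 := by
      calc Real.log (∫ ω, Real.exp (g ω) ∂P) ≤ Real.log (Real.exp (v * t ^ 2 / 2)) :=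
            Real.log_le_log (integral_exp_pos hexpP) hexp_le
        _ = v * t ^ 2 / 2 := Real.log_exp _
    rw [hgint] at h0
    linarith
  -- optimize
  set a : ℝ := μ - ∫ ω, f ω ∂Q with ha
  rw [ge_iff_le, sub_le_iff_le_add, ← sub_le_iff_le_add']
  by_contra hc
  push_neg at hc
  have hsqrt : Real.sqrt (2 * v * K) < a := hc
  have ha0 : 0 < a := lt_of_le_of_lt (Real.sqrt_nonneg _) hsqrt
  have h1 := key (a / v)
  have h2 : a ^ 2 ≤ 2 * v * K := by
    have hv' : v ≠ 0 := hv.ne'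
    field_simp at h1
    nlinarith [mul_pos hv hv, sq_nonneg a]
  have : a ≤ Real.sqrt (2 * v * K) := by
    calc a = Real.sqrt (a ^ 2) := (Real.sqrt_sq ha0.le).symm
      _ ≤ Real.sqrt (2 * v * K) := Real.sqrt_le_sqrt h2
  linarith
end

section
/- Let P and Q be probability measures on a measurable space Ω with Q absolutely continuous with respect to P. Let f : Ω → ℝ be measurable and Q-integrable with E_P[f] = μ, and suppose f − μ is sub-Gaussian with variance proxy σ² > 0 under P, i.e. E_P[exp(t(f − μ))] ≤ exp(σ²t²/2) for every real t. Let δ be a real number with μ > δ. If KL(Q‖P) < (μ − δ)²/(2σ²), then E_Q[f] > δ. -/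
open MeasureTheory Real

/-- Nonnegativity of relative entropy. -/
lemma integral_llr_nonneg_aux {Ω : Type*} [MeasurableSpace Ω] (Q ν : Measure Ω)
    [IsProbabilityMeasure Q] [IsProbabilityMeasure ν] (hQν : Q ≪ ν)
    (h_int : Integrable (llr Q ν) Q) : 0 ≤ ∫ ω, llr Q ν ω ∂Q := by
  have h1 : ∀ᵐ x ∂Q, -llr Q ν x ≤ (ν.rnDeriv Q x).toReal - 1 := by
    filter_upwards [exp_neg_llr hQν] with x hx
    have hpos : 0 < (ν.rnDeriv Q x).toReal := hx ▸ exp_pos _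
    calc -llr Q ν x = log (exp (-llr Q ν x)) := (log_exp _).symm
    _ = log ((ν.rnDeriv Q x).toReal) := by rw [hx]
    _ ≤ (ν.rnDeriv Q x).toReal - 1 := log_le_sub_one_of_pos hpos
  have h2 : ∫ x, -llr Q ν x ∂Q ≤ ∫ x, ((ν.rnDeriv Q x).toReal - 1) ∂Q :=
    integral_mono_ae h_int.neg (Measure.integrable_toReal_rnDeriv.sub (integrable_const 1)) h1
  have h3 : ∫ x, ((ν.rnDeriv Q x).toReal - 1) ∂Q ≤ 0 := by
    rw [integral_sub Measure.integrable_toReal_rnDeriv (integrable_const 1)]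
    have hle : ∫ x, (ν.rnDeriv Q x).toReal ∂Q
        ≤ (ν Set.univ).toReal - (ν.singularPart Q Set.univ).toReal := by
      rw [Measure.integral_toReal_rnDeriv']
      exact le_rfl
    have h4 : ((ν.singularPart Q) Set.univ).toReal ≥ 0 := ENNReal.toReal_nonneg
    simp only [integral_const, measure_univ, probReal_univ, ENNReal.toReal_one, smul_eq_mul, one_mul]
    have : (ν Set.univ).toReal = 1 := by simp
    linarith
  rw [integral_neg] at h2
  linarith

/-- Donsker–Varadhan style inequality. -/
lemma integral_le_klDiv_add_log_aux {Ω : Type*} [MeasurableSpace Ω] (Q P : Measure Ω)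
    [IsProbabilityMeasure P] [IsProbabilityMeasure Q] (hQP : Q ≪ P)
    (g : Ω → ℝ) (hgQ : Integrable g Q) (hgP : Integrable (fun x ↦ exp (g x)) P)
    (h_int : Integrable (llr Q P) Q) :
    ∫ ω, g ω ∂Q ≤ ∫ ω, llr Q P ω ∂Q + log (∫ ω, exp (g ω) ∂P) := by
  have hν : IsProbabilityMeasure (P.tilted g) := isProbabilityMeasure_tilted hgP
  have hQν : Q ≪ P.tilted g := hQP.trans (absolutelyContinuous_tilted hgP)
  have h_int' : Integrable (llr Q (P.tilted g)) Q :=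
    integrable_llr_tilted_right hQP hgQ h_int hgP
  have h0 : 0 ≤ ∫ ω, llr Q (P.tilted g) ω ∂Q :=
    integral_llr_nonneg_aux Q (P.tilted g) hQν h_int'
  rw [integral_llr_tilted_right hQP hgQ hgP h_int] at h0
  linarith

/-- **Certified KL radius.** If `f - μ` is sub-Gaussian with variance proxy `v` under `P`,
`Q ≪ P`, `μ > δ` and `KL(Q‖P) < (μ - δ)²/(2v)`, then `E_Q[f] > δ`. -/
theorem expectation_above_threshold_of_klDiv_lt_radius {Ω : Type*} [MeasurableSpace Ω]
    (P Q : Measure Ω) [IsProbabilityMeasure P] [IsProbabilityMeasure Q]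
    (hQP : Q ≪ P)
    (f : Ω → ℝ) (hf : Measurable f) (hfQ : Integrable f Q)
    (μ : ℝ) (hμ : ∫ ω, f ω ∂P = μ)
    (v : ℝ) (hv : 0 < v)
    (hSG : ∀ t : ℝ, Integrable (fun ω => Real.exp (t * (f ω - μ))) P ∧
      ∫ ω, Real.exp (t * (f ω - μ)) ∂P ≤ Real.exp (v * t ^ 2 / 2))
    (δ : ℝ) (hδ : δ < μ)
    (hlt : klDiv Q P < (((μ - δ) ^ 2 / (2 * v) : ℝ) : EReal)) :
    ∫ ω, f ω ∂Q > δ := by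
  classical
  -- extract that klDiv is finite and equals the integral
  have hcond : Q ≪ P ∧ Integrable (llr Q P) Q := by
    by_contra h
    rw [klDiv, if_neg h] at hlt
    exact (not_top_lt (α := EReal)) hlt
  have hkl : klDiv Q P = ((∫ ω, llr Q P ω ∂Q : ℝ) : EReal) := by
    rw [klDiv, if_pos hcond]
  rw [hkl, EReal.coe_lt_coe_iff] at hlt
  set KL := ∫ ω, llr Q P ω ∂Q with hKL
  set t : ℝ := -((μ - δ) / v) with ht
  have hs : 0 < (μ - δ) / v := div_pos (by linarith) hv
  -- apply DV with g = t (f - μ)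
  have hgQ : Integrable (fun ω ↦ t * (f ω - μ)) Q :=
    ((hfQ.sub (integrable_const μ)).const_mul t)
  have hDV' := integral_le_klDiv_add_log_aux Q P hQP (fun ω ↦ t * (f ω - μ)) hgQ
    (hSG t).1 hcond.2
  have hDV : ∫ ω, t * (f ω - μ) ∂Q ≤ KL + log (∫ ω, exp (t * (f ω - μ)) ∂P) := hDV'
  have hpos : 0 < ∫ ω, exp (t * (f ω - μ)) ∂P := integral_exp_pos (hSG t).1
  have hlog : log (∫ ω, exp (t * (f ω - μ)) ∂P) ≤ v * t ^ 2 / 2 := by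
    calc log (∫ ω, exp (t * (f ω - μ)) ∂P) ≤ log (exp (v * t ^ 2 / 2)) :=
      Real.log_le_log hpos (hSG t).2
    _ = v * t ^ 2 / 2 := log_exp _
  have hint : ∫ ω, t * (f ω - μ) ∂Q = t * ((∫ ω, f ω ∂Q) - μ) := by
    rw [integral_const_mul, integral_sub hfQ (integrable_const μ), integral_const]
    simp
  rw [hint] at hDV
  have hvt : v * t ^ 2 / 2 = (μ - δ) ^ 2 / (2 * v) := by
    rw [ht]
    field_simp
  have key : t * ((∫ ω, f ω ∂Q) - μ) < (μ - δ) ^ 2 / v := by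
    have : (μ - δ) ^ 2 / (2 * v) + (μ - δ) ^ 2 / (2 * v) = (μ - δ) ^ 2 / v := by
      field_simp; ring
    clear_value t KL
    linarith [hDV, hlog, hlt, hvt, this]
  -- t * (EQ f - μ) = ((μ-δ)/v) * (μ - EQ f)
  have h2 : ((μ - δ) / v) * (μ - ∫ ω, f ω ∂Q) < ((μ - δ) / v) * (μ - δ) := by
    have he : t * ((∫ ω, f ω ∂Q) - μ) = ((μ - δ) / v) * (μ - ∫ ω, f ω ∂Q) := by
      rw [ht]; ring
    have he2 : (μ - δ) ^ 2 / v = ((μ - δ) / v) * (μ - δ) := by field_simp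
    rw [he, he2] at key
    exact key
  have := (mul_lt_mul_iff_right₀ hs).mp h2
  linarith
end

section
/- Let σ > 0, let μ be a real number, and let P = N(μ, σ²) be the Gaussian measure on ℝ. Then for every ρ ≥ 0 there exists a probability measure Q on ℝ, absolutely continuous with respect to P, such that KL(Q‖P) = ρ and the mean of the identity function under Q equals μ − √(2σ²ρ); that is, the lower bound E_Q[f] ≥ μ − √(2σ²·KL(Q‖P)) is attained with equality for the identity score f(x) = x when the base distribution is Gaussian. -/
open MeasureTheory Real

section AuxGaussianKL
open ProbabilityTheory NNReal ENNReal

lemma aux_odd_zero {b : ℝ} : ∫ y : ℝ, y * rexp (-b * y ^ 2) = 0 := by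
  have h := integral_neg_eq_self (fun y : ℝ => y * rexp (-b * y ^ 2)) volume
  simp only [neg_sq, neg_mul, neg_neg] at h
  rw [integral_neg] at h
  simp only [neg_mul] at h ⊢
  linarith [h]

lemma aux_integrable_mul (m : ℝ) {v : ℝ≥0} (hv : v ≠ 0) :
    Integrable (fun x => x * gaussianPDFReal m v x) := by
  have hv' : (0:ℝ) < v := lt_of_le_of_ne (v.coe_nonneg) (by exact_mod_cast (Ne.symm hv))
  have hb : (0:ℝ) < (2 * (v:ℝ))⁻¹ := by positivity
  set c : ℝ := (√(2 * π * v))⁻¹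
  have hg : Integrable (fun y : ℝ => (y + m) * (c * rexp (-(2 * (v:ℝ))⁻¹ * y ^ 2))) := by
    have h1 := (integrable_mul_exp_neg_mul_sq hb).const_mul c
    have h2 := (integrable_exp_neg_mul_sq hb).const_mul (m * c)
    have := h1.add h2
    refine this.congr ?_
    filter_upwards with y
    simp only [Pi.add_apply]
    ring
  have := hg.comp_sub_right m
  refine this.congr ?_
  filter_upwards with x
  rw [gaussianPDFReal]
  have harg : -(x - m) ^ 2 / (2 * (v:ℝ)) = -(2 * (v:ℝ))⁻¹ * (x - m) ^ 2 := by
    field_simp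
  rw [harg]
  ring

lemma aux_integral_mul (m : ℝ) {v : ℝ≥0} (hv : v ≠ 0) :
    ∫ x, x * gaussianPDFReal m v x = m := by
  have hv' : (0:ℝ) < v := lt_of_le_of_ne (v.coe_nonneg) (by exact_mod_cast (Ne.symm hv))
  have hb : (0:ℝ) < (2 * (v:ℝ))⁻¹ := by positivity
  set c : ℝ := (√(2 * π * v))⁻¹ with hc
  have key : ∀ x : ℝ, x * gaussianPDFReal m v x
      = (x - m) * gaussianPDFReal m v x + m * gaussianPDFReal m v x := by
    intro x; ring
  have h0 : ∫ x, (x - m) * gaussianPDFReal m v x = 0 := by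
    have ht := integral_add_right_eq_self (μ := volume) (fun x => (x - m) * gaussianPDFReal m v x) m
    rw [← ht]
    have : ∀ y : ℝ, (y + m - m) * gaussianPDFReal m v (y + m)
        = c * (y * rexp (-(2 * (v:ℝ))⁻¹ * y ^ 2)) := by
      intro y
      rw [gaussianPDFReal]
      have harg : -(y + m - m) ^ 2 / (2 * (v:ℝ)) = -(2 * (v:ℝ))⁻¹ * y ^ 2 := by
        field_simp
        ring
      rw [harg]
      rw [hc]
      ring_nf
    simp_rw [this]
    rw [integral_const_mul, aux_odd_zero, mul_zero]
  have hint1 : Integrable (fun x => (x - m) * gaussianPDFReal m v x) := by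
    have := (aux_integrable_mul m hv).sub ((integrable_gaussianPDFReal m v).const_mul m)
    refine this.congr ?_
    filter_upwards with x
    simp only [Pi.sub_apply]
    ring
  have hint2 : Integrable (fun x => m * gaussianPDFReal m v x) :=
    (integrable_gaussianPDFReal m v).const_mul m
  calc ∫ x, x * gaussianPDFReal m v x
      = ∫ x, ((x - m) * gaussianPDFReal m v x + m * gaussianPDFReal m v x) := by
        simp_rw [key]
    _ = (∫ x, (x - m) * gaussianPDFReal m v x) + ∫ x, m * gaussianPDFReal m v x :=
        integral_add hint1 hint2
    _ = m := by
        rw [h0, zero_add, integral_const_mul, integral_gaussianPDFReal_eq_one m hv, mul_one]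

lemma aux_integral_id (m : ℝ) {v : ℝ≥0} (hv : v ≠ 0) :
    ∫ x, x ∂(gaussianReal m v) = m := by
  rw [gaussianReal_of_var_ne_zero _ hv]
  have hm : Measurable (fun x => (gaussianPDFReal m v x).toNNReal) :=
    (measurable_gaussianPDFReal m v).real_toNNReal
  have hd : gaussianPDF m v = fun x => ((gaussianPDFReal m v x).toNNReal : ℝ≥0∞) := by
    funext x; rfl
  rw [hd, integral_withDensity_eq_integral_smul hm]
  have : ∀ x : ℝ, (gaussianPDFReal m v x).toNNReal • x = x * gaussianPDFReal m v x := by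
    intro x
    rw [NNReal.smul_def, smul_eq_mul, Real.coe_toNNReal _ (gaussianPDFReal_nonneg m v x)]
    ring
  simp_rw [this]
  exact aux_integral_mul m hv

lemma aux_integrable_id (m : ℝ) {v : ℝ≥0} (hv : v ≠ 0) :
    Integrable (fun x => x) (gaussianReal m v) := by
  rw [gaussianReal_of_var_ne_zero _ hv]
  rw [integrable_withDensity_iff (measurable_gaussianPDF m v)
    (Filter.Eventually.of_forall fun x => ENNReal.ofReal_lt_top)]
  refine (aux_integrable_mul m hv).congr ?_
  filter_upwards with x
  rw [gaussianPDF, ENNReal.toReal_ofReal (gaussianPDFReal_nonneg m v x)]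

/-- **Tightness of the KL lower bound for Gaussian base measures.** For `P = N(μ, σ²)`
with `σ > 0` and any `ρ ≥ 0`, there is a probability measure `Q ≪ P` with
`KL(Q‖P) = ρ` whose mean is exactly `μ - √(2σ²ρ)`, so the bound
`E_Q[f] ≥ μ - √(2σ² KL(Q‖P))` is attained with equality for the identity score. -/
theorem gaussian_kl_lower_bound_tight (σ μ : ℝ) (hσ : 0 < σ)
    (P : Measure ℝ) (hP : P = ProbabilityTheory.gaussianReal μ (σ ^ 2).toNNReal) :
    ∀ ρ : ℝ, 0 ≤ ρ → ∃ Q : Measure ℝ, IsProbabilityMeasure Q ∧ Q ≪ P ∧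
      klDiv Q P = (ρ : EReal) ∧ ∫ x, x ∂Q = μ - Real.sqrt (2 * σ ^ 2 * ρ) := by
  intro ρ hρ
  set v : ℝ≥0 := (σ ^ 2).toNNReal with hvdef
  have hσ2 : (0:ℝ) < σ ^ 2 := by positivity
  have hvR : (v : ℝ) = σ ^ 2 := Real.coe_toNNReal _ (le_of_lt hσ2)
  have hv0 : v ≠ 0 := by
    intro h
    rw [h] at hvR
    simp at hvR
    linarith
  set s : ℝ := Real.sqrt (2 * σ ^ 2 * ρ) with hs
  have hs2 : s ^ 2 = 2 * σ ^ 2 * ρ := Real.sq_sqrt (by positivity)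
  set m : ℝ := μ - s with hm
  set Q : Measure ℝ := gaussianReal m v with hQ
  set ℓ : ℝ → ℝ := fun x => ((x - μ) ^ 2 - (x - m) ^ 2) / (2 * σ ^ 2) with hℓ
  have habs : Q ≪ P := by
    rw [hP]
    exact (gaussianReal_absolutelyContinuous m hv0).trans
      (gaussianReal_absolutelyContinuous' μ hv0)
  -- Q as withDensity of P
  have hmeasℓ : Measurable ℓ := by
    apply Measurable.div_const
    exact (((measurable_id.sub_const _).pow_const _).sub
      ((measurable_id.sub_const _).pow_const _))
  have hmeasg : Measurable (fun x => ENNReal.ofReal (rexp (ℓ x))) :=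
    (measurable_exp.comp hmeasℓ).ennreal_ofReal
  have hQP : Q = P.withDensity (fun x => ENNReal.ofReal (rexp (ℓ x))) := by
    rw [hP, hQ, gaussianReal_of_var_ne_zero _ hv0, gaussianReal_of_var_ne_zero _ hv0,
      ← withDensity_mul _ (measurable_gaussianPDF μ v) hmeasg]
    congr 1
    funext x
    rw [Pi.mul_apply, gaussianPDF, gaussianPDF,
      ← ENNReal.ofReal_mul (gaussianPDFReal_nonneg μ v x)]
    congr 1
    rw [gaussianPDFReal, gaussianPDFReal]
    have hE : (-(x - μ) ^ 2 / (2 * (v:ℝ))) + ℓ x = -(x - m) ^ 2 / (2 * (v:ℝ)) := by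
      rw [hℓ, hvR]
      field_simp
      ring
    calc (√(2 * π * (v:ℝ)))⁻¹ * rexp (-(x - m) ^ 2 / (2 * (v:ℝ)))
        = (√(2 * π * (v:ℝ)))⁻¹ * rexp ((-(x - μ) ^ 2 / (2 * (v:ℝ))) + ℓ x) := by rw [hE]
      _ = (√(2 * π * (v:ℝ)))⁻¹ * rexp (-(x - μ) ^ 2 / (2 * (v:ℝ))) * rexp (ℓ x) := by
          rw [Real.exp_add]; ring
  haveI : SigmaFinite P := by rw [hP]; infer_instance
  have hrn : Q.rnDeriv P =ᵐ[P] (fun x => ENNReal.ofReal (rexp (ℓ x))) := by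
    rw [hQP]
    exact Measure.rnDeriv_withDensity P hmeasg
  have hllrP : llr Q P =ᵐ[P] ℓ := by
    filter_upwards [hrn] with x hx
    rw [llr, hx, ENNReal.toReal_ofReal (le_of_lt (exp_pos _)), Real.log_exp]
  have hllrQ : llr Q P =ᵐ[Q] ℓ := habs.ae_le hllrP
  -- linear form of ℓ
  have hℓlin : ∀ x, ℓ x = ((m - μ) / σ ^ 2) * x + (-(m - μ) * (μ + m) / (2 * σ ^ 2)) := by
    intro x
    rw [hℓ]
    field_simp
    ring
  have hPM : IsProbabilityMeasure Q := by rw [hQ]; infer_instance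
  have hid : Integrable (fun x => x) Q := by rw [hQ]; exact aux_integrable_id m hv0
  have hintℓ : Integrable ℓ Q := by
    have := (hid.const_mul ((m - μ) / σ ^ 2)).add
      (integrable_const (-(m - μ) * (μ + m) / (2 * σ ^ 2)))
    refine this.congr ?_
    filter_upwards with x
    simp only [Pi.add_apply]
    rw [hℓlin x]
  have hmean : ∫ x, x ∂Q = m := by rw [hQ]; exact aux_integral_id m hv0
  have hintval : ∫ x, ℓ x ∂Q = ρ := by
    have h1 : ∫ x, ℓ x ∂Q
        = ∫ x, (((m - μ) / σ ^ 2) * x + (-(m - μ) * (μ + m) / (2 * σ ^ 2))) ∂Q :=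
      integral_congr_ae (Filter.Eventually.of_forall fun x => hℓlin x)
    rw [h1, integral_add (hid.const_mul _) (integrable_const _), integral_const_mul,
      integral_const, hmean]
    simp only [measure_univ, ENNReal.toReal_one, one_smul, probReal_univ]
    have h2 : (m - μ) / σ ^ 2 * m + -(m - μ) * (μ + m) / (2 * σ ^ 2)
        = (m - μ) ^ 2 / (2 * σ ^ 2) := by
      field_simp
      ring
    rw [h2]
    have h3 : (m - μ) ^ 2 = s ^ 2 := by rw [hm]; ring
    rw [h3, hs2]
    field_simp
  refine ⟨Q, hPM, habs, ?_, by rw [hmean, hm]⟩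
  have hintllr : Integrable (llr Q P) Q := hintℓ.congr hllrQ.symm
  rw [klDiv, if_pos ⟨habs, hintllr⟩]
  have : ∫ x, llr Q P x ∂Q = ρ := by
    rw [integral_congr_ae hllrQ, hintval]
  rw [this]

end AuxGaussianKL
end
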